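/- Let d ≥ 1 and m ≥ 1 be integers and let C : [0,1]^d → ℝ satisfy the ℓ¹-Lipschitz property |C(u) − C(v)| ≤ Σ_{ℓ=1}^{d} |u_ℓ − v_ℓ| for all u, v ∈ [0,1]^d. Then sup_{u ∈ [0,1]^d} |B_m C(u) − C(u)| ≤ d/(2√m). -/

import Mathlib

/-- The Bernstein basis polynomial `P_{k,m}(u) = C(m,k) u^k (1-u)^(m-k)`. -/
noncomputable def bernsteinBasis (m k : ℕ) (u : ℝ) : ℝ :=
  (m.choose k : ℝ) * u ^ k * (1 - u) ^ (m - k)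

/-- The multivariate Bernstein polynomial of order `m` of `f : [0,1]^d → ℝ`. -/
noncomputable def bernsteinB (d m : ℕ) (f : (Fin d → ℝ) → ℝ) (u : Fin d → ℝ) : ℝ :=
  ∑ k : Fin d → Fin (m + 1),
    f (fun ℓ => ((k ℓ : ℕ) : ℝ) / m) * ∏ ℓ, bernsteinBasis m (k ℓ) (u ℓ)

lemma bernsteinBasis_eq_bernstein (m k : ℕ) (x : unitInterval) :
    bernsteinBasis m k x = bernstein m k x := by
  simp [bernsteinBasis, bernstein_apply]

lemma bernsteinBasis_nonneg {m k : ℕ} {u : ℝ} (h : u ∈ Set.Icc (0:ℝ) 1) :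
    0 ≤ bernsteinBasis m k u := by
  obtain ⟨h0, h1⟩ := h
  have h2 : (0:ℝ) ≤ 1 - u := by linarith
  unfold bernsteinBasis
  positivity

lemma bernsteinBasis_sum (m : ℕ) {u : ℝ} (h : u ∈ Set.Icc (0:ℝ) 1) :
    ∑ k : Fin (m + 1), bernsteinBasis m k (u : ℝ) = 1 := by
  have := bernstein.probability m ⟨u, h⟩
  rw [← this]
  exact Finset.sum_congr rfl fun k _ => bernsteinBasis_eq_bernstein m k ⟨u, h⟩

lemma bernsteinBasis_abs_sum (m : ℕ) (hm : 1 ≤ m) {u : ℝ} (h : u ∈ Set.Icc (0:ℝ) 1) :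
    ∑ k : Fin (m + 1), |((k : ℕ) : ℝ) / m - u| * bernsteinBasis m k u
      ≤ 1 / (2 * Real.sqrt m) := by
  have hmpos : (0:ℝ) < m := by exact_mod_cast hm
  have hvar := bernstein.variance (n := m) (by omega) ⟨u, h⟩
  simp only [bernstein.z] at hvar
  have hvar' : ∑ k : Fin (m + 1), (((k:ℕ):ℝ) / m - u) ^ 2 * bernsteinBasis m k u
      = u * (1 - u) / m := by
    rw [← hvar]
    refine Finset.sum_congr rfl fun k _ => ?_
    have hb : (bernstein m (k:ℕ)) (⟨u, h⟩ : unitInterval) = bernsteinBasis m k u := by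
      simp [bernstein_apply, bernsteinBasis]
    rw [hb]
    ring
  set S := ∑ k : Fin (m + 1), |((k : ℕ) : ℝ) / m - u| * bernsteinBasis m k u with hS
  have hSnn : 0 ≤ S :=
    Finset.sum_nonneg fun k _ => mul_nonneg (abs_nonneg _) (bernsteinBasis_nonneg h)
  have hCS : S ^ 2 ≤ (∑ k : Fin (m + 1), (((k:ℕ):ℝ) / m - u) ^ 2 * bernsteinBasis m k u) *
      ∑ k : Fin (m + 1), bernsteinBasis m k u := by
    refine Finset.sum_sq_le_sum_mul_sum_of_sq_eq_mul _ ?_ ?_ ?_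
    · exact fun k _ => mul_nonneg (sq_nonneg _) (bernsteinBasis_nonneg h)
    · exact fun k _ => bernsteinBasis_nonneg h
    · intro k _
      rw [mul_pow, sq_abs]
      ring
  rw [hvar', bernsteinBasis_sum m h, mul_one] at hCS
  have hbound : u * (1 - u) / m ≤ 1 / (4 * m) := by
    rw [div_le_div_iff₀ hmpos (by positivity)]
    nlinarith [sq_nonneg (2 * u - 1)]
  have hS2 : S ^ 2 ≤ (1 / (2 * Real.sqrt m)) ^ 2 := by
    have : (1 / (2 * Real.sqrt m)) ^ 2 = 1 / (4 * m) := by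
      rw [div_pow, mul_pow, Real.sq_sqrt hmpos.le]
      norm_num
    rw [this]
    exact hCS.trans hbound
  have hpos : 0 ≤ 1 / (2 * Real.sqrt m) := by positivity
  nlinarith

/-- if `C : [0,1]^d → ℝ` satisfies the ℓ¹-Lipschitz property
`|C(u) − C(v)| ≤ Σ_ℓ |u_ℓ − v_ℓ|`, then
`sup_{u ∈ [0,1]^d} |B_m C(u) − C(u)| ≤ d/(2√m)`. -/
theorem bernstein_bias_le_of_l1_lipschitz (d m : ℕ) (hd : 1 ≤ d) (hm : 1 ≤ m)
    (C : (Fin d → ℝ) → ℝ)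
    (hLip : ∀ u v : Fin d → ℝ, (∀ ℓ, u ℓ ∈ Set.Icc (0 : ℝ) 1) →
      (∀ ℓ, v ℓ ∈ Set.Icc (0 : ℝ) 1) → |C u - C v| ≤ ∑ ℓ, |u ℓ - v ℓ|) :
    ∀ u : Fin d → ℝ, (∀ ℓ, u ℓ ∈ Set.Icc (0 : ℝ) 1) →
      |bernsteinB d m C u - C u| ≤ (d : ℝ) / (2 * Real.sqrt m) := by
  intro u hu
  have hmpos : (0:ℝ) < m := by exact_mod_cast hm
  have hwnn : ∀ k : Fin d → Fin (m + 1), 0 ≤ ∏ ℓ, bernsteinBasis m (k ℓ) (u ℓ) :=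
    fun k => Finset.prod_nonneg fun ℓ _ => bernsteinBasis_nonneg (hu ℓ)
  have hwsum : ∑ k : Fin d → Fin (m + 1), ∏ ℓ, bernsteinBasis m (k ℓ) (u ℓ) = 1 := by
    have hs := Finset.sum_prod_piFinset (Finset.univ : Finset (Fin (m + 1)))
      (fun ℓ j => bernsteinBasis m j (u ℓ))
    rw [Fintype.piFinset_univ] at hs
    rw [hs]
    exact Finset.prod_eq_one fun ℓ _ => bernsteinBasis_sum m (hu ℓ)
  have hgrid : ∀ k : Fin d → Fin (m + 1), ∀ ℓ,
      ((k ℓ : ℕ) : ℝ) / m ∈ Set.Icc (0:ℝ) 1 := by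
    intro k ℓ
    constructor
    · positivity
    · rw [div_le_one hmpos]
      exact_mod_cast Nat.lt_succ_iff.mp (k ℓ).isLt
  have hdiff : bernsteinB d m C u - C u =
      ∑ k : Fin d → Fin (m + 1),
        (C (fun ℓ => ((k ℓ : ℕ) : ℝ) / m) - C u) * ∏ ℓ, bernsteinBasis m (k ℓ) (u ℓ) := by
    have h1 : C u = ∑ k : Fin d → Fin (m + 1),
        C u * ∏ ℓ, bernsteinBasis m (k ℓ) (u ℓ) := by
      rw [← Finset.mul_sum, hwsum, mul_one]
    rw [bernsteinB]
    conv_lhs => rw [h1]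
    rw [← Finset.sum_sub_distrib]
    exact Finset.sum_congr rfl fun k _ => by ring
  rw [hdiff]
  calc |∑ k : Fin d → Fin (m + 1),
        (C (fun ℓ => ((k ℓ : ℕ) : ℝ) / m) - C u) * ∏ ℓ, bernsteinBasis m (k ℓ) (u ℓ)|
      ≤ ∑ k : Fin d → Fin (m + 1),
        |C (fun ℓ => ((k ℓ : ℕ) : ℝ) / m) - C u| * ∏ ℓ, bernsteinBasis m (k ℓ) (u ℓ) := by
        refine (Finset.abs_sum_le_sum_abs _ _).trans (le_of_eq ?_)
        exact Finset.sum_congr rfl fun k _ => by rw [abs_mul, abs_of_nonneg (hwnn k)]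
    _ ≤ ∑ k : Fin d → Fin (m + 1),
        (∑ ℓ, |((k ℓ : ℕ) : ℝ) / m - u ℓ|) * ∏ ℓ, bernsteinBasis m (k ℓ) (u ℓ) := by
        refine Finset.sum_le_sum fun k _ => mul_le_mul_of_nonneg_right ?_ (hwnn k)
        exact hLip _ _ (hgrid k) hu
    _ = ∑ ℓ, ∑ k : Fin d → Fin (m + 1),
        |((k ℓ : ℕ) : ℝ) / m - u ℓ| * ∏ ℓ', bernsteinBasis m (k ℓ') (u ℓ') := by
        rw [Finset.sum_comm]
        exact Finset.sum_congr rfl fun k _ => by rw [Finset.sum_mul]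
    _ ≤ ∑ _ℓ : Fin d, 1 / (2 * Real.sqrt m) := by
        refine Finset.sum_le_sum fun ℓ _ => ?_
        set g : Fin d → Fin (m + 1) → ℝ := fun ℓ' j =>
          if ℓ' = ℓ then |((j:ℕ):ℝ) / m - u ℓ| * bernsteinBasis m j (u ℓ')
          else bernsteinBasis m j (u ℓ') with hg
        have point : ∀ k : Fin d → Fin (m + 1),
            |((k ℓ : ℕ):ℝ) / m - u ℓ| * ∏ ℓ', bernsteinBasis m (k ℓ') (u ℓ')
              = ∏ ℓ', g ℓ' (k ℓ') := by
          intro k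
          rw [← Finset.mul_prod_erase Finset.univ
              (fun ℓ' => bernsteinBasis m (k ℓ') (u ℓ')) (Finset.mem_univ ℓ),
              ← Finset.mul_prod_erase Finset.univ
              (fun ℓ' => g ℓ' (k ℓ')) (Finset.mem_univ ℓ)]
          have he : ∏ ℓ' ∈ Finset.univ.erase ℓ, g ℓ' (k ℓ')
              = ∏ ℓ' ∈ Finset.univ.erase ℓ, bernsteinBasis m (k ℓ') (u ℓ') := by
            refine Finset.prod_congr rfl fun ℓ' hℓ' => ?_
            simp [hg, Finset.ne_of_mem_erase hℓ']
          rw [he]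
          simp only [hg, if_pos rfl]
          ring
        simp_rw [point]
        have hsum := Finset.sum_prod_piFinset (Finset.univ : Finset (Fin (m + 1))) g
        rw [Fintype.piFinset_univ] at hsum
        rw [hsum]
        have hfac : ∏ ℓ', ∑ j ∈ Finset.univ, g ℓ' j
            = ∑ j : Fin (m + 1), |((j:ℕ):ℝ) / m - u ℓ| * bernsteinBasis m j (u ℓ) := by
          rw [Finset.prod_eq_single ℓ]
          · simp [hg]
          · intro b _ hb
            simp only [hg, if_neg hb]
            exact bernsteinBasis_sum m (hu b)
          · intro hc; exact absurd (Finset.mem_univ ℓ) hc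
        rw [hfac]
        exact bernsteinBasis_abs_sum m hm (hu ℓ)
    _ = (d : ℝ) / (2 * Real.sqrt m) := by
        rw [Finset.sum_const, Finset.card_univ, Fintype.card_fin, nsmul_eq_mul]
        ring
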